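/- arXiv:2206.11956 — 4 statements merged into one kernel-verified Lean document; each statement's English description precedes it below -/
import Mathlib

section
/- For every transposition τ in S_n and every g in S_n, the commutator [g, τ] = g⁻¹τ⁻¹gτ has order dividing 6. Hence the word with constants w(x) = [x, τ]^6 is a mixed identity for S_n. -/
open Equiv

private lemma swap_three_pow {α : Type*} [DecidableEq α] {x y z : α}
    (hxy : x ≠ y) (hxz : x ≠ z) (hyz : y ≠ z) :
    (Equiv.swap x y * Equiv.swap x z) ^ 3 = 1 := by
  ext p
  simp only [pow_succ, pow_zero, one_mul, Equiv.Perm.mul_apply, Equiv.Perm.one_apply]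
  by_cases hx : p = x
  · subst hx; simp [Equiv.swap_apply_def, hxy, hxz, hyz, hxy.symm, hxz.symm, hyz.symm]
  by_cases hy : p = y
  · subst hy; simp [Equiv.swap_apply_def, hxy, hxz, hyz, hxy.symm, hxz.symm, hyz.symm]
  by_cases hz : p = z
  · subst hz; simp [Equiv.swap_apply_def, hxy, hxz, hyz, hxy.symm, hxz.symm, hyz.symm]
  · simp [Equiv.swap_apply_of_ne_of_ne, hx, hy, hz]

private lemma swap_mul_swap_pow_six {α : Type*} [DecidableEq α] {a b c d : α}
    (hab : a ≠ b) (hcd : c ≠ d) :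
    (Equiv.swap c d * Equiv.swap a b) ^ 6 = 1 := by
  by_cases h1 : c = a ∧ d = b
  · rw [h1.1, h1.2, Equiv.swap_mul_self, one_pow]
  by_cases h2 : c = b ∧ d = a
  · rw [h2.1, h2.2, Equiv.swap_comm, Equiv.swap_mul_self, one_pow]
  by_cases hca : c = a
  · have hdb : d ≠ b := fun h => h1 ⟨hca, h⟩
    subst hca
    have : (Equiv.swap c d * Equiv.swap c b) ^ 3 = 1 :=
      swap_three_pow hcd hab hdb
    calc (Equiv.swap c d * Equiv.swap c b) ^ 6
        = ((Equiv.swap c d * Equiv.swap c b) ^ 3) ^ 2 := by rw [← pow_mul]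
      _ = 1 := by rw [this, one_pow]
  by_cases hcb : c = b
  · have hda : d ≠ a := fun h => h2 ⟨hcb, h⟩
    subst hcb
    rw [Equiv.swap_comm a c]
    have : (Equiv.swap c d * Equiv.swap c a) ^ 3 = 1 :=
      swap_three_pow hcd (Ne.symm hab) hda
    calc (Equiv.swap c d * Equiv.swap c a) ^ 6
        = ((Equiv.swap c d * Equiv.swap c a) ^ 3) ^ 2 := by rw [← pow_mul]
      _ = 1 := by rw [this, one_pow]
  by_cases hda : d = a
  · have hcb' : c ≠ b := hcb
    subst hda
    rw [Equiv.swap_comm c d]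
    have : (Equiv.swap d c * Equiv.swap d b) ^ 3 = 1 :=
      swap_three_pow (Ne.symm hcd) hab hcb'
    calc (Equiv.swap d c * Equiv.swap d b) ^ 6
        = ((Equiv.swap d c * Equiv.swap d b) ^ 3) ^ 2 := by rw [← pow_mul]
      _ = 1 := by rw [this, one_pow]
  by_cases hdb : d = b
  · subst hdb
    rw [Equiv.swap_comm c d, Equiv.swap_comm a d]
    have : (Equiv.swap d c * Equiv.swap d a) ^ 3 = 1 :=
      swap_three_pow (Ne.symm hcd) (Ne.symm hab) hca
    calc (Equiv.swap d c * Equiv.swap d a) ^ 6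
        = ((Equiv.swap d c * Equiv.swap d a) ^ 3) ^ 2 := by rw [← pow_mul]
      _ = 1 := by rw [this, one_pow]
  · -- disjoint case
    have hcomm : Commute (Equiv.swap c d) (Equiv.swap a b) := by
      apply Equiv.Perm.Disjoint.commute
      intro p
      by_cases hpc : p = c
      · subst hpc; right; exact Equiv.swap_apply_of_ne_of_ne hca hcb
      by_cases hpd : p = d
      · subst hpd; right; exact Equiv.swap_apply_of_ne_of_ne hda hdb
      · left; exact Equiv.swap_apply_of_ne_of_ne hpc hpd
    have e1 : Equiv.swap c d ^ 6 = 1 := by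
      rw [show (6:ℕ) = 2*3 from rfl, pow_mul, pow_two, Equiv.swap_mul_self, one_pow]
    have e2 : Equiv.swap a b ^ 6 = 1 := by
      rw [show (6:ℕ) = 2*3 from rfl, pow_mul, pow_two, Equiv.swap_mul_self, one_pow]
    rw [hcomm.mul_pow, e1, e2, one_mul]

/-- For every transposition `τ = swap a b` in `S_n` and every `g`, the commutator
`[g, τ] = g⁻¹ τ⁻¹ g τ` has order dividing 6; hence `w(x) = [x, τ]^6` is a mixed
identity for `S_n`. -/
theorem commutator_with_transposition_order_dvd_six (n : ℕ) (a b : Fin n) (hab : a ≠ b)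
    (g : Equiv.Perm (Fin n)) :
    orderOf (g⁻¹ * (Equiv.swap a b)⁻¹ * g * Equiv.swap a b) ∣ 6 ∧
      (g⁻¹ * (Equiv.swap a b)⁻¹ * g * Equiv.swap a b) ^ 6 = 1 := by
  have key : g⁻¹ * (Equiv.swap a b)⁻¹ * g * Equiv.swap a b
      = Equiv.swap (g⁻¹ a) (g⁻¹ b) * Equiv.swap a b := by
    rw [Equiv.swap_inv, Equiv.swap_apply_apply, inv_inv]
  have hcd : g⁻¹ a ≠ g⁻¹ b := fun h => hab (g⁻¹.injective h)
  have h6 : (g⁻¹ * (Equiv.swap a b)⁻¹ * g * Equiv.swap a b) ^ 6 = 1 := by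
    rw [key]; exact swap_mul_swap_pow_six hab hcd
  exact ⟨orderOf_dvd_of_pow_eq_one h6, h6⟩
end

section
/- Let G be a finite nonabelian simple group. For every subset S ⊆ G and every g ∈ G \ S, there exists a map φ : G → G that is a word map with constants (induced by some w ∈ F₁ * G) with φ(s) = 1 for all s ∈ S and φ(g) ≠ 1. -/
/-- A word with constants in one variable over `G`, encoded as a list of letters:
`Sum.inl c` is the constant `c ∈ G`, `Sum.inr true` is `x`, `Sum.inr false` is `x⁻¹`.
Its evaluation at `g ∈ G` is the induced word map with constants. -/
def evalW {G : Type*} [Group G] (w : List (G ⊕ Bool)) (g : G) : G :=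
  (w.map fun l => match l with
    | Sum.inl c => c
    | Sum.inr true => g
    | Sum.inr false => g⁻¹).prod

/-- The formal inverse of a word with constants. -/
def invW {G : Type*} [Group G] (w : List (G ⊕ Bool)) : List (G ⊕ Bool) :=
  (w.map fun l => match l with
    | Sum.inl c => Sum.inl c⁻¹
    | Sum.inr b => Sum.inr (!b)).reverse

lemma evalW_append {G : Type*} [Group G] (w₁ w₂ : List (G ⊕ Bool)) (g : G) :
    evalW (w₁ ++ w₂) g = evalW w₁ g * evalW w₂ g := by
  simp [evalW]

lemma evalW_invW {G : Type*} [Group G] (w : List (G ⊕ Bool)) (g : G) :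
    evalW (invW w) g = (evalW w g)⁻¹ := by
  induction w with
  | nil => simp [evalW, invW]
  | cons l w ih =>
    have h : invW (l :: w) = invW w ++ [(match l with
        | Sum.inl c => Sum.inl c⁻¹
        | Sum.inr b => Sum.inr (!b) : G ⊕ Bool)] := by
      simp [invW]
    rw [h, evalW_append, ih]
    rcases l with c | b
    · simp [evalW, mul_inv_rev]
    · cases b <;> simp [evalW, mul_inv_rev]

/-- Evaluation of the word `u (d v d⁻¹) u⁻¹ (d v d⁻¹)⁻¹`. -/
lemma evalW_commWord {G : Type*} [Group G] (u v : List (G ⊕ Bool)) (d x : G) :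
    evalW (u ++ ([Sum.inl d] ++ v ++ [Sum.inl d⁻¹]) ++ invW u ++
        ([Sum.inl d] ++ invW v ++ [Sum.inl d⁻¹])) x
      = evalW u x * (d * evalW v x * d⁻¹) * (evalW u x)⁻¹ *
          (d * evalW v x * d⁻¹)⁻¹ := by
  simp only [evalW_append, evalW_invW]
  simp only [evalW, List.map_cons, List.map_nil, List.prod_cons, List.prod_nil, mul_one]
  group

lemma comm_of_comm_word {G : Type*} [Group G] (a c : G) (h : a * c * a⁻¹ * c⁻¹ = 1) :
    a * c = c * a := by
  have h1 : a * c * a⁻¹ = c := by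
    have h2 := mul_eq_one_iff_eq_inv.mp h
    simpa using h2
  calc a * c = a * c * a⁻¹ * a := by group
  _ = c * a := by rw [h1]

/-- Center of a nonabelian simple group is trivial. -/
lemma center_eq_bot_aux {G : Type*} [Group G] [IsSimpleGroup G]
    (hna : ¬ ∀ a b : G, a * b = b * a) : Subgroup.center G = ⊥ := by
  rcases (inferInstance : (Subgroup.center G).Normal).eq_bot_or_eq_top with h | h
  · exact h
  · exfalso
    apply hna
    intro a b
    have : a ∈ Subgroup.center G := h ▸ Subgroup.mem_top a
    exact ((Subgroup.mem_center_iff.mp this) b).symm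

lemma exists_conj_not_commute {G : Type*} [Group G] [IsSimpleGroup G]
    (hna : ¬ ∀ a b : G, a * b = b * a) {a b : G} (ha : a ≠ 1) (hb : b ≠ 1) :
    ∃ d : G, a * (d * b * d⁻¹) ≠ (d * b * d⁻¹) * a := by
  by_contra h
  push_neg at h
  have hcl : Subgroup.normalClosure ({b} : Set G) ≤ Subgroup.centralizer {a} := by
    rw [Subgroup.normalClosure]
    apply (Subgroup.closure_le _).2
    intro x hx
    obtain ⟨c, hc, hconj⟩ := Group.mem_conjugatesOfSet_iff.mp hx
    rw [Set.mem_singleton_iff] at hc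
    subst hc
    obtain ⟨d, hd⟩ := isConj_iff.mp hconj
    show x ∈ Subgroup.centralizer {a}
    rw [Subgroup.mem_centralizer_iff]
    rintro y (rfl : y = a)
    rw [← hd]
    exact h d
  have htop : Subgroup.normalClosure ({b} : Set G) = ⊤ := by
    rcases (Subgroup.normalClosure_normal (s := ({b} : Set G))).eq_bot_or_eq_top with h' | h'
    · exfalso
      have hbmem : b ∈ Subgroup.normalClosure ({b} : Set G) :=
        Subgroup.subset_normalClosure rfl
      rw [h', Subgroup.mem_bot] at hbmem
      exact hb hbmem
    · exact h'
  have hac : a ∈ Subgroup.center G := by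
    rw [Subgroup.mem_center_iff]
    intro y
    have hy : y ∈ Subgroup.centralizer ({a} : Set G) := hcl (htop ▸ Subgroup.mem_top y)
    exact (Subgroup.mem_centralizer_iff.mp hy a rfl).symm
  rw [center_eq_bot_aux hna, Subgroup.mem_bot] at hac
  exact ha hac

/-- Let `G` be a finite nonabelian simple group. For every subset `S ⊆ G` and every
`g ∈ G \ S`, there is a word map with constants `φ : G → G` with `φ(s) = 1` for all
`s ∈ S` and `φ(g) ≠ 1`. -/
theorem exists_word_vanishing_on_set (G : Type*) [Group G] [Fintype G]
    [IsSimpleGroup G] (hna : ¬ ∀ a b : G, a * b = b * a)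
    (S : Set G) (g : G) (hg : g ∉ S) :
    ∃ w : List (G ⊕ Bool), (∀ s ∈ S, evalW w s = 1) ∧ evalW w g ≠ 1 := by
  have hS : S.Finite := Set.toFinite S
  revert hg
  refine Set.Finite.induction_on (motive := fun S _ => g ∉ S → ∃ w : List (G ⊕ Bool), (∀ s ∈ S, evalW w s = 1) ∧ evalW w g ≠ 1) S hS ?_ ?_
  · intro _
    obtain ⟨a, ha⟩ := exists_ne (1 : G)
    exact ⟨[Sum.inl a], fun s hs => absurd hs (Set.notMem_empty s), by simpa [evalW] using ha⟩
  · rintro s₀ S' hs₀ hS' ih hg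
    have hg' : g ∉ S' := fun h => hg (Set.mem_insert_of_mem _ h)
    have hgs₀ : g ≠ s₀ := fun h => hg (h ▸ Set.mem_insert _ _)
    obtain ⟨u, hu1, hu2⟩ := ih hg'
    -- word killing s₀ but not g : x ↦ s₀⁻¹ * x
    set v : List (G ⊕ Bool) := [Sum.inl s₀⁻¹, Sum.inr true] with hv
    have hveval : ∀ x : G, evalW v x = s₀⁻¹ * x := by
      intro x; simp [evalW, hv]
    have hv0 : evalW v s₀ = 1 := by simp [hveval]
    have hvg : evalW v g ≠ 1 := by
      rw [hveval]
      intro h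
      exact hgs₀ (by rw [← inv_mul_cancel s₀] at h; exact (mul_left_cancel h).symm ▸ rfl)
    obtain ⟨d, hd⟩ := exists_conj_not_commute hna hu2 hvg
    refine ⟨u ++ ([Sum.inl d] ++ v ++ [Sum.inl d⁻¹]) ++ invW u ++
      ([Sum.inl d] ++ invW v ++ [Sum.inl d⁻¹]), ?_, ?_⟩
    · intro s hs
      rw [evalW_commWord]
      rcases Set.mem_insert_iff.mp hs with rfl | hs'
      · rw [hv0]; group
      · rw [hu1 s hs']; group
    · rw [evalW_commWord]
      intro h
      exact hd (comm_of_comm_word _ _ h)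
end

section
/- Let G be a finite nonabelian group such that every function f : G → G is induced by a word with constants from F₁ * G. Then G is simple. -/
lemma evalW_cons {G : Type*} [Group G] (a : G ⊕ Bool) (w : List (G ⊕ Bool)) (g : G) :
    evalW (a :: w) g = (match a with
      | Sum.inl c => c
      | Sum.inr true => g
      | Sum.inr false => g⁻¹) * evalW w g := by
  simp [evalW]

lemma evalW_congr_quot {G : Type*} [Group G] (N : Subgroup G) [N.Normal]
    (g : G) (hg : g ∈ N) (w : List (G ⊕ Bool)) :
    QuotientGroup.mk' N (evalW w g) = QuotientGroup.mk' N (evalW w 1) := by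
  induction w with
  | nil => rfl
  | cons a w ih =>
      rw [evalW_cons, evalW_cons, map_mul, map_mul, ih]
      congr 1
      rcases a with c | b
      · rfl
      · have hg' : QuotientGroup.mk' N g = 1 := by
          simpa [QuotientGroup.eq_one_iff] using hg
        cases b <;> simp [hg', hg]

/-- Let `G` be a finite nonabelian group such that every function `f : G → G` is induced
by a word with constants from `F₁ * G`. Then `G` is simple. -/
theorem simple_of_all_maps_word_maps (G : Type*) [Group G] [Fintype G]
    (hna : ¬ ∀ a b : G, a * b = b * a)
    (hrep : ∀ f : G → G, ∃ w : List (G ⊕ Bool), ∀ g : G, evalW w g = f g) :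
    IsSimpleGroup G := by
  have hnt : Nontrivial G := by
    by_contra h
    rw [not_nontrivial_iff_subsingleton] at h
    exact hna fun a b => Subsingleton.elim _ _
  constructor
  intro N hN
  by_cases hbot : N = ⊥
  · exact Or.inl hbot
  · right
    obtain ⟨g, hgN, hg1⟩ : ∃ g ∈ N, g ≠ 1 := by
      by_contra hc
      push_neg at hc
      exact hbot (Subgroup.eq_bot_iff_forall N |>.mpr hc)
    rw [Subgroup.eq_top_iff']
    intro h
    classical
    obtain ⟨w, hw⟩ := hrep (fun x => if x = g then h else 1)
    have h1 : evalW w g = h := by simp [hw g]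
    have h2 : evalW w 1 = 1 := by simp [hw 1, hg1.symm]
    have := evalW_congr_quot N g hgN w
    rw [h1, h2, map_one] at this
    exact (QuotientGroup.eq_one_iff h).mp this
end

section
/- Suppose w ∈ F_r * S_n is a strong word with constants (removing all constants from its reduced form causes no cancellation among the variables), w is not itself a constant from S_n, and n ≥ 2. If the induced map w : S_n^r → S_n is constant, then ℓ(w) ≥ n/2. -/
lemma list_prod_apply {α : Type*} (L : List (Equiv.Perm α)) (x : α) :
    L.prod x = L.foldr (fun f y => f y) x := by
  induction L with
  | nil => rfl
  | cons f L ih => simp [List.prod_cons, Equiv.Perm.mul_apply, ih]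

lemma exists_perm_extend {n : ℕ} (J : Finset ℕ) (f g : ℕ → Fin n)
    (hf : Set.InjOn f J) (hg : Set.InjOn g J) :
    ∃ π : Equiv.Perm (Fin n), ∀ j ∈ J, π (f j) = g j := by
  classical
  set F := J.image f with hF
  set G := J.image g with hG
  have hcard : Fᶜ.card = Gᶜ.card := by
    rw [Finset.card_compl, Finset.card_compl,
      Finset.card_image_of_injOn hf, Finset.card_image_of_injOn hg]
  set e₂ := Finset.equivOfCardEq hcard with he₂
  have hmem : ∀ {a : Fin n}, a ∈ F → ∃ j, j ∈ J ∧ f j = a := by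
    intro a ha
    rcases Finset.mem_image.mp ha with ⟨j, hj, hfj⟩
    exact ⟨j, hj, hfj⟩
  set h : Fin n → Fin n := fun a =>
    if ha : a ∈ F then g (hmem ha).choose
    else (e₂ ⟨a, Finset.mem_compl.mpr ha⟩ : Fin n) with hh
  have hh1 : ∀ {a : Fin n} (ha : a ∈ F), h a = g (hmem ha).choose := by
    intro a ha; simp only [hh, dif_pos ha]
  have hG1 : ∀ {a : Fin n} (ha : a ∈ F), h a ∈ G := by
    intro a ha
    rw [hh1 ha]
    exact Finset.mem_image_of_mem g (hmem ha).choose_spec.1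
  have hG2 : ∀ {a : Fin n} (ha : a ∉ F), h a ∈ Gᶜ := by
    intro a ha
    simp only [hh, dif_neg ha]
    exact (e₂ ⟨a, Finset.mem_compl.mpr ha⟩).2
  have hinj : Function.Injective h := by
    intro a b hab
    by_cases ha : a ∈ F <;> by_cases hb : b ∈ F
    · obtain ⟨hja, hfa⟩ := (hmem ha).choose_spec
      obtain ⟨hjb, hfb⟩ := (hmem hb).choose_spec
      rw [hh1 ha, hh1 hb] at hab
      have := hg (Finset.mem_coe.mpr hja) (Finset.mem_coe.mpr hjb) hab
      rw [← hfa, ← hfb, this]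
    · exact absurd (hab ▸ hG1 ha) (Finset.mem_compl.mp (hG2 hb))
    · exact absurd (hab ▸ hG2 ha) (by simpa using hG1 hb)
    · simp only [hh, dif_neg ha, dif_neg hb] at hab
      have := e₂.injective (Subtype.coe_injective hab)
      simpa using congrArg Subtype.val this
  refine ⟨Equiv.ofBijective h (Finite.injective_iff_bijective.mp hinj), ?_⟩
  intro j hj
  have hfj : f j ∈ F := Finset.mem_image_of_mem f hj
  show h (f j) = g j
  rw [hh1 hfj]
  obtain ⟨hjc, hfc⟩ := (hmem hfj).choose_spec
  exact congrArg g (hf (Finset.mem_coe.mpr hjc) (Finset.mem_coe.mpr hj) hfc)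


/-- Evaluation of the word with constants
`c₀ x_{i 0}^{ε 0} c₁ ⋯ x_{i (l-1)}^{ε (l-1)} c_l ∈ F_r * S_n` at `σ : Fin r → S_n`
(`ε j = true` stands for the letter `x_{i j}`, `false` for `x_{i j}⁻¹`). -/
def evalWC {r n l : ℕ} (i : Fin l → Fin r) (ε : Fin l → Bool)
    (c : Fin (l + 1) → Equiv.Perm (Fin n)) (σ : Fin r → Equiv.Perm (Fin n)) :
    Equiv.Perm (Fin n) :=
  c 0 * ((List.finRange l).map fun j =>
    (if ε j then σ (i j) else (σ (i j))⁻¹) * c j.succ).prod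

/-- If `w ∈ F_r * S_n` (with `n ≥ 2`) is a strong word with constants (no adjacent pair of
letters `x_{i j}^{ε j}, x_{i (j+1)}^{ε (j+1)}` with `i j = i (j+1)` and
`ε j = −ε (j+1)`), `w` is not a constant (`l ≥ 1`), and the induced word map
`S_n^r → S_n` is constant, then `ℓ(w) = l ≥ n / 2`, i.e. `n ≤ 2 l`. -/
theorem strong_constant_word_long (r n l : ℕ) (hn : 2 ≤ n) (hl : 0 < l)
    (i : Fin l → Fin r) (ε : Fin l → Bool) (c : Fin (l + 1) → Equiv.Perm (Fin n))
    (hstrong : ∀ (j : ℕ) (hj : j + 1 < l),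
      i ⟨j, by omega⟩ = i ⟨j + 1, hj⟩ → ε ⟨j, by omega⟩ = ε ⟨j + 1, hj⟩)
    (hconst : ∀ σ τ : Fin r → Equiv.Perm (Fin n), evalWC i ε c σ = evalWC i ε c τ) :
    n ≤ 2 * l := by
  classical
  by_contra hcon
  push_neg at hcon
  set x₀ : Fin n := ⟨0, by omega⟩ with hx₀
  set z : Fin n := evalWC i ε c (fun _ => 1) x₀ with hz
  set i' : ℕ → Fin r := fun j => if h : j < l then i ⟨j, h⟩ else i ⟨0, hl⟩ with hi'
  set ε' : ℕ → Bool := fun j => if h : j < l then ε ⟨j, h⟩ else true with hε'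
  set c' : ℕ → Equiv.Perm (Fin n) := fun j => if h : j < l + 1 then c ⟨j, h⟩ else 1 with hc'
  set Inn : (ℕ → Fin n) → ℕ → Fin n := fun T j => c' (j+1) (T (j+1)) with hInn
  set fs : (ℕ → Fin n) → ℕ → Fin n := fun T j => if ε' j then Inn T j else T j with hfs
  set sn : (ℕ → Fin n) → ℕ → Fin n := fun T j => if ε' j then T j else Inn T j with hsn
  have hstrong' : ∀ j, j + 1 < l → i' j = i' (j+1) → ε' j = ε' (j+1) := by
    intro j hj hij
    have h1 : j < l := by omega
    simp only [hi', dif_pos h1, dif_pos hj] at hij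
    simp only [hε', dif_pos h1, dif_pos hj]
    exact hstrong j hj hij
  have key : ∀ m, m ≤ l → ∃ T : ℕ → Fin n,
      T l = x₀ ∧
      (∀ j j', l - m ≤ j → j < j' → j' < l → i' j = i' j' →
        fs T j ≠ fs T j' ∧ sn T j ≠ sn T j') ∧
      (m < l → ∀ j, l - m - 1 < j → j < l → i' j = i' (l - m - 1) →
        (if ε' (l - m - 1) then Inn T (l - m - 1) ≠ fs T j
          else Inn T (l - m - 1) ≠ sn T j)) ∧
      (m = l → c' 0 (T 0) ≠ z) := by
    intro m
    induction m with
    | zero =>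
      intro _
      refine ⟨fun _ => x₀, rfl, ?_, ?_, ?_⟩
      · intro j j' h1 h2 h3 _
        exact absurd h3 (by omega)
      · intro _ j h1 h2 _
        exact absurd h2 (by omega)
      · exact fun h => absurd h (by omega)
    | succ m ih =>
      intro hm1
      obtain ⟨T, hT1, hT2, hT3, -⟩ := ih (by omega)
      have hml : m < l := by omega
      set j₀ := l - m - 1 with hj₀
      have hj₀l : j₀ < l := by omega
      set A : Finset (Fin n) :=
        ((Finset.range l).filter (fun j => j₀ < j ∧ i' j = i' j₀)).image
          (fun j => if ε' j₀ then sn T j else fs T j) with hA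
      set C : Finset (Fin n) :=
        if j₀ = 0 then {z}
        else ((Finset.range l).filter (fun j => j₀ - 1 < j ∧ i' j = i' (j₀ - 1))).image
          (fun j => if ε' (j₀ - 1) then fs T j else sn T j) with hC
      set B : Finset (Fin n) := C.image (c' j₀).symm with hB
      have hAc : A.card ≤ l := le_trans Finset.card_image_le
        (le_trans (Finset.card_filter_le _ _) (by simp))
      have hCc : C.card ≤ l := by
        rw [hC]; split
        · simp; omega
        · exact le_trans Finset.card_image_le
            (le_trans (Finset.card_filter_le _ _) (by simp))
      have hBc : B.card ≤ l := le_trans Finset.card_image_le hCc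
      obtain ⟨t, ht⟩ : ∃ t, t ∉ A ∪ B := by
        by_contra hcontra
        push_neg at hcontra
        have h1 : (Finset.univ : Finset (Fin n)).card ≤ (A ∪ B).card :=
          Finset.card_le_card (fun x _ => hcontra x)
        have h2 := Finset.card_union_le A B
        simp only [Finset.card_univ, Fintype.card_fin] at h1
        omega
      have htA : t ∉ A := fun h => ht (Finset.mem_union_left _ h)
      have htB : t ∉ B := fun h => ht (Finset.mem_union_right _ h)
      set T' := Function.update T j₀ t with hT'def
      have hup : ∀ a, a ≠ j₀ → T' a = T a := fun a ha => Function.update_of_ne ha _ _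
      have hupj : T' j₀ = t := Function.update_self _ _ _
      have hInn' : ∀ a, a + 1 ≠ j₀ → Inn T' a = Inn T a := by
        intro a ha; simp only [hInn]; rw [hup _ ha]
      have hfs' : ∀ a, j₀ < a → fs T' a = fs T a := by
        intro a ha; simp only [hfs, hInn]; rw [hup a (by omega), hup (a+1) (by omega)]
      have hsn' : ∀ a, j₀ < a → sn T' a = sn T a := by
        intro a ha; simp only [hsn, hInn]; rw [hup a (by omega), hup (a+1) (by omega)]
      have hInnj₀ : Inn T' j₀ = Inn T j₀ := hInn' j₀ (by omega)
      have hfsj₀ : fs T' j₀ = if ε' j₀ then Inn T j₀ else t := by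
        simp only [hfs]; rw [hupj, hInnj₀]
      have hsnj₀ : sn T' j₀ = if ε' j₀ then t else Inn T j₀ := by
        simp only [hsn]; rw [hupj, hInnj₀]
      have e0 : l - (m + 1) = j₀ := by omega
      refine ⟨T', ?_, ?_, ?_, ?_⟩
      · rw [hup l (by omega)]; exact hT1
      · intro j j' hjlow hjj' hj'l hij
        rw [e0] at hjlow
        rcases eq_or_lt_of_le hjlow with hje | hjgt
        · -- j = j₀
          subst hje
          have hj'mem : j' ∈ (Finset.range l).filter (fun j => j₀ < j ∧ i' j = i' j₀) := by
            simp only [Finset.mem_filter, Finset.mem_range]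
            exact ⟨hj'l, hjj', hij.symm⟩
          have htne : t ≠ (if ε' j₀ then sn T j' else fs T j') :=
            fun h => htA (h ▸ Finset.mem_image_of_mem _ hj'mem)
          have h3 := hT3 hml j' hjj' hj'l hij.symm
          rw [hfs' j' hjj', hsn' j' hjj', hfsj₀, hsnj₀]
          by_cases hε : ε' j₀
          · rw [if_pos hε] at h3 htne ⊢
            rw [if_pos hε]
            exact ⟨h3, htne⟩
          · rw [if_neg hε] at h3 htne ⊢
            rw [if_neg hε]
            exact ⟨htne, h3⟩
        · rw [hfs' j hjgt, hfs' j' (lt_trans hjgt hjj'), hsn' j hjgt,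
            hsn' j' (lt_trans hjgt hjj')]
          exact hT2 j j' (by omega) hjj' hj'l hij
      · intro hm2 j hjgt hjl hij
        have e1 : l - (m + 1) - 1 = j₀ - 1 := by omega
        rw [e1] at hjgt hij ⊢
        have hj₀1 : 1 ≤ j₀ := by omega
        have e2 : j₀ - 1 + 1 = j₀ := by omega
        have hInnval : Inn T' (j₀ - 1) = c' j₀ t := by
          simp only [hInn]; rw [e2, hupj]
        have hCne : C = ((Finset.range l).filter
            (fun j => j₀ - 1 < j ∧ i' j = i' (j₀ - 1))).image
            (fun j => if ε' (j₀ - 1) then fs T j else sn T j) := by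
          rw [hC, if_neg (by omega)]
        have hctC : c' j₀ t ∉ C := by
          intro hmem
          exact htB (Finset.mem_image.mpr ⟨_, hmem, Equiv.symm_apply_apply _ _⟩)
        have hjmem : j ∈ (Finset.range l).filter
            (fun j => j₀ - 1 < j ∧ i' j = i' (j₀ - 1)) := by
          simp only [Finset.mem_filter, Finset.mem_range]
          exact ⟨hjl, hjgt, hij⟩
        have hvC : (if ε' (j₀ - 1) then fs T j else sn T j) ∈ C := by
          rw [hCne]; exact Finset.mem_image_of_mem _ hjmem
        have hne : c' j₀ t ≠ (if ε' (j₀ - 1) then fs T j else sn T j) :=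
          fun h => hctC (h ▸ hvC)
        rcases eq_or_lt_of_le (show j₀ ≤ j by omega) with hje | hjgt'
        · -- j = j₀, use strongness
          subst hje
          have hεeq : ε' (j₀ - 1) = ε' j₀ := by
            have := hstrong' (j₀ - 1) (by omega)
            rw [e2] at this
            exact this hij.symm
          by_cases hε : ε' (j₀ - 1)
          · rw [if_pos hε] at hne ⊢
            rw [hInnval, hfsj₀, if_pos (hεeq ▸ hε)]
            have : fs T j₀ = Inn T j₀ := by
              simp only [hfs]; rw [if_pos (hεeq ▸ hε)]
            rw [this] at hne
            exact hne
          · rw [if_neg hε] at hne ⊢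
            have hε₀ : ¬ (ε' j₀ = true) := fun h => hε (hεeq ▸ h)
            rw [hInnval, hsnj₀, if_neg hε₀]
            have : sn T j₀ = Inn T j₀ := by
              simp only [hsn]; rw [if_neg hε₀]
            rw [this] at hne
            exact hne
        · rw [hInnval]
          by_cases hε : ε' (j₀ - 1)
          · rw [if_pos hε] at hne ⊢
            rw [hfs' j hjgt']
            exact hne
          · rw [if_neg hε] at hne ⊢
            rw [hsn' j hjgt']
            exact hne
      · intro hml'
        have e3 : j₀ = 0 := by omega
        have hC0 : C = {z} := by rw [hC, if_pos e3]
        rw [show (0:ℕ) = j₀ from e3.symm, hupj]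
        intro h
        apply htB
        rw [hB, hC0]
        exact Finset.mem_image.mpr ⟨z, Finset.mem_singleton_self z,
          by rw [← h, Equiv.symm_apply_apply]⟩
  obtain ⟨T, hT1, hT2, -, hT4⟩ := key l le_rfl
  have hT4' := hT4 rfl
  have hT2' : ∀ j j', j < j' → j' < l → i' j = i' j' →
      fs T j ≠ fs T j' ∧ sn T j ≠ sn T j' := fun j j' => hT2 j j' (by omega)
  have hσex : ∀ k : Fin r, ∃ π : Equiv.Perm (Fin n),
      ∀ j ∈ (Finset.range l).filter (fun j => i' j = k), π (fs T j) = sn T j := by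
    intro k
    apply exists_perm_extend
    · intro a ha b hb hab
      simp only [Finset.coe_filter, Set.mem_setOf_eq, Finset.mem_range] at ha hb
      by_contra hne
      rcases lt_or_gt_of_ne hne with h | h
      · exact (hT2' a b h hb.1 (ha.2.trans hb.2.symm)).1 hab
      · exact (hT2' b a h ha.1 (hb.2.trans ha.2.symm)).1 hab.symm
    · intro a ha b hb hab
      simp only [Finset.coe_filter, Set.mem_setOf_eq, Finset.mem_range] at ha hb
      by_contra hne
      rcases lt_or_gt_of_ne hne with h | h
      · exact (hT2' a b h hb.1 (ha.2.trans hb.2.symm)).2 hab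
      · exact (hT2' b a h ha.1 (hb.2.trans ha.2.symm)).2 hab.symm
  choose σ hσ using hσex
  have hstep : ∀ j, j < l → σ (i' j) (fs T j) = sn T j := by
    intro j hj
    exact hσ (i' j) j (by simp [Finset.mem_filter, Finset.mem_range, hj])
  have heval : ∀ d, d ≤ l → ((List.finRange l).drop (l - d)).foldr
      (fun j y => ((if ε j then σ (i j) else (σ (i j))⁻¹) * c j.succ) y) x₀ = T (l - d) := by
    intro d
    induction d with
    | zero =>
      intro _
      rw [Nat.sub_zero]
      have hnil : (List.finRange l).drop l = [] := by
        apply List.drop_eq_nil_of_le; simp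
      rw [hnil]
      exact hT1.symm ▸ rfl
    | succ d ihd =>
      intro hd
      set j := l - (d+1) with hjdef
      have hjl : j < l := by omega
      have hdrop : (List.finRange l).drop j = ⟨j, hjl⟩ :: (List.finRange l).drop (j+1) := by
        rw [List.drop_eq_getElem_cons (by simpa using hjl)]
        congr 1
        simp
      have hih := ihd (by omega)
      have e1 : l - d = j + 1 := by omega
      rw [e1] at hih
      rw [hdrop, List.foldr_cons, hih]
      simp only [Equiv.Perm.mul_apply]
      have hcs : c (Fin.succ ⟨j, hjl⟩) (T (j+1)) = Inn T j := by
        have h2 : c' (j+1) = c ⟨j+1, by omega⟩ := by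
          simp only [hc']
          rw [dif_pos (show j+1 < l+1 by omega)]
        have h3 : c (Fin.succ ⟨j, hjl⟩) = c ⟨j+1, by omega⟩ := rfl
        simp only [hInn, h2, h3]
      have hie : i ⟨j, hjl⟩ = i' j := by simp only [hi']; rw [dif_pos hjl]
      have hεe : ε ⟨j, hjl⟩ = ε' j := by simp only [hε']; rw [dif_pos hjl]
      rw [hcs, hie, hεe]
      have hst := hstep j hjl
      by_cases hε : ε' j
      · rw [if_pos hε]
        simp only [hfs, hsn, if_pos hε] at hst
        exact hst
      · rw [if_neg hε]
        simp only [hfs, hsn, if_neg hε] at hst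
        rw [← hst, Equiv.Perm.inv_def, Equiv.symm_apply_apply]
  have hfin := heval l le_rfl
  rw [Nat.sub_self, List.drop_zero] at hfin
  have hevalσ : evalWC i ε c σ x₀ = c' 0 (T 0) := by
    show (c 0 * ((List.finRange l).map fun j =>
      (if ε j then σ (i j) else (σ (i j))⁻¹) * c j.succ).prod) x₀ = c' 0 (T 0)
    rw [Equiv.Perm.mul_apply, list_prod_apply, List.foldr_map, hfin]
    congr 1
  have hzz : evalWC i ε c σ x₀ = z := by
    rw [hz]
    exact congrArg (fun π => π x₀) (hconst σ (fun _ => 1))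
  exact hT4' (hevalσ ▸ hzz)
end
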